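/- G_μ is exactly the subgroup of GL(2,ℤ) generated by the two matrices f₀ = [[1,2],[0,−1]] and f₁ = [[0,1],[1,0]]: every matrix in GL(2,ℤ) with both column sums equal to 1 is a product of copies of f₀ and f₁, and conversely every such product has both column sums equal to 1. -/

import Mathlib

open Matrix

/-- The matrix `gₙ = [[1−n, −n],[n, 1+n]]`. -/
def gmat (n : ℤ) : Matrix (Fin 2) (Fin 2) ℤ := !![1 - n, -n; n, 1 + n]

/-- The matrix `fₙ = [[1−n, 2−n],[n, −1+n]]`. -/
def fmat (n : ℤ) : Matrix (Fin 2) (Fin 2) ℤ := !![1 - n, 2 - n; n, n - 1]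

/-- `gₙ` as an element of `GL(2,ℤ)` (its inverse is `g₋ₙ`). -/
def gU (n : ℤ) : Matrix.GeneralLinearGroup (Fin 2) ℤ :=
  ⟨gmat n, gmat (-n),
    by ext i j; fin_cases i <;> fin_cases j <;>
      simp [gmat, Matrix.mul_apply, Fin.sum_univ_two, Matrix.one_apply] <;> ring,
    by ext i j; fin_cases i <;> fin_cases j <;>
      simp [gmat, Matrix.mul_apply, Fin.sum_univ_two, Matrix.one_apply] <;> ring⟩

/-- `fₙ` as an element of `GL(2,ℤ)` (it is its own inverse). -/
def fU (n : ℤ) : Matrix.GeneralLinearGroup (Fin 2) ℤ :=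
  ⟨fmat n, fmat n,
    by ext i j; fin_cases i <;> fin_cases j <;>
      simp [fmat, Matrix.mul_apply, Fin.sum_univ_two, Matrix.one_apply] <;> ring,
    by ext i j; fin_cases i <;> fin_cases j <;>
      simp [fmat, Matrix.mul_apply, Fin.sum_univ_two, Matrix.one_apply] <;> ring⟩

/-- Membership in `G_μ`: both column sums of `g` equal `1`. -/
def memGmu (g : Matrix.GeneralLinearGroup (Fin 2) ℤ) : Prop :=
  (↑g : Matrix (Fin 2) (Fin 2) ℤ) 0 0 + (↑g : Matrix (Fin 2) (Fin 2) ℤ) 1 0 = 1 ∧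
  (↑g : Matrix (Fin 2) (Fin 2) ℤ) 0 1 + (↑g : Matrix (Fin 2) (Fin 2) ℤ) 1 1 = 1

lemma gU_mul (m n : ℤ) : gU m * gU n = gU (m + n) := by
  apply Units.ext
  show gmat m * gmat n = gmat (m + n)
  ext i j
  fin_cases i <;> fin_cases j <;>
    simp [gmat, Matrix.mul_apply, Fin.sum_univ_two] <;> ring

lemma gU_zero : gU 0 = 1 := by
  apply Units.ext
  show gmat 0 = 1
  ext i j
  fin_cases i <;> fin_cases j <;> simp [gmat, Matrix.one_apply]

lemma gU_one_eq : gU 1 = fU 1 * fU 0 := by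
  apply Units.ext
  show gmat 1 = fmat 1 * fmat 0
  ext i j
  fin_cases i <;> fin_cases j <;>
    simp [gmat, fmat, Matrix.mul_apply, Fin.sum_univ_two]

lemma fU_eq (n : ℤ) : fU n = gU n * fU 0 := by
  apply Units.ext
  show fmat n = gmat n * fmat 0
  ext i j
  fin_cases i <;> fin_cases j <;>
    simp [gmat, fmat, Matrix.mul_apply, Fin.sum_univ_two] <;> ring

lemma gU_neg_one : gU (-1) = (gU 1)⁻¹ := by
  apply eq_inv_of_mul_eq_one_left
  rw [gU_mul]; norm_num [gU_zero]

lemma gU_mem (n : ℤ) :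
    gU n ∈ Subgroup.closure ({fU 0, fU 1} : Set (Matrix.GeneralLinearGroup (Fin 2) ℤ)) := by
  have h0 : fU 0 ∈ Subgroup.closure ({fU 0, fU 1} : Set (Matrix.GeneralLinearGroup (Fin 2) ℤ)) :=
    Subgroup.subset_closure (by simp)
  have h1 : fU 1 ∈ Subgroup.closure ({fU 0, fU 1} : Set (Matrix.GeneralLinearGroup (Fin 2) ℤ)) :=
    Subgroup.subset_closure (by simp)
  have hg1 := Subgroup.mul_mem _ h1 h0
  rw [← gU_one_eq] at hg1
  induction n using Int.induction_on with
  | zero => rw [gU_zero]; exact Subgroup.one_mem _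
  | succ k ih => rw [show (k : ℤ) + 1 = k + 1 from rfl, ← gU_mul]; exact Subgroup.mul_mem _ ih hg1
  | pred k ih =>
      rw [show -(k : ℤ) - 1 = -k + -1 by ring, ← gU_mul]
      exact Subgroup.mul_mem _ ih (by rw [gU_neg_one]; exact Subgroup.inv_mem _ hg1)

lemma classify (g : Matrix.GeneralLinearGroup (Fin 2) ℤ) (h : memGmu g) :
    ∃ n, g = gU n ∨ g = fU n := by
  obtain ⟨h1, h2⟩ := h
  have hAB : (↑g : Matrix (Fin 2) (Fin 2) ℤ) * (↑(g⁻¹) : Matrix (Fin 2) (Fin 2) ℤ) = 1 := by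
    rw [← Units.val_mul, mul_inv_cancel, Units.val_one]
  have hdet : ((↑g : Matrix (Fin 2) (Fin 2) ℤ)).det = 1 ∨
      ((↑g : Matrix (Fin 2) (Fin 2) ℤ)).det = -1 := by
    have h : ((↑g : Matrix (Fin 2) (Fin 2) ℤ)).det * ((↑(g⁻¹) : Matrix (Fin 2) (Fin 2) ℤ)).det = 1 := by
      rw [← Matrix.det_mul, hAB, Matrix.det_one]
    rcases Int.isUnit_iff.mp (IsUnit.of_mul_eq_one _ h) with h' | h' <;> tauto
  rw [Matrix.det_fin_two] at hdet
  set A := (↑g : Matrix (Fin 2) (Fin 2) ℤ) with hA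
  refine ⟨1 - A 0 0, ?_⟩
  rcases hdet with hd | hd
  · left
    have hb : A 0 1 = A 0 0 - 1 := by
      linear_combination (-1) * hd + A 0 0 * h2 - A 0 1 * h1
    apply Units.ext
    show A = gmat (1 - A 0 0)
    ext i j
    fin_cases i <;> fin_cases j <;> simp [gmat] <;> linarith [h1, h2, hb]
  · right
    have hb : A 0 1 = A 0 0 + 1 := by
      linear_combination (-1) * hd + A 0 0 * h2 - A 0 1 * h1
    apply Units.ext
    show A = fmat (1 - A 0 0)
    ext i j
    fin_cases i <;> fin_cases j <;> simp [fmat] <;> linarith [h1, h2, hb]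

def Gmu : Subgroup (Matrix.GeneralLinearGroup (Fin 2) ℤ) where
  carrier := {g | memGmu g}
  one_mem' := by constructor <;> simp [Matrix.one_apply]
  mul_mem' := by
    rintro a b ⟨ha1, ha2⟩ ⟨hb1, hb2⟩
    constructor
    · show (↑(a * b) : Matrix (Fin 2) (Fin 2) ℤ) _ _ + (↑(a * b) : Matrix (Fin 2) (Fin 2) ℤ) _ _ = 1
      rw [Units.val_mul]
      simp only [Matrix.mul_apply, Fin.sum_univ_two]
      linear_combination (↑b : Matrix (Fin 2) (Fin 2) ℤ) 0 0 * ha1 +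
        (↑b : Matrix (Fin 2) (Fin 2) ℤ) 1 0 * ha2 + hb1
    · show (↑(a * b) : Matrix (Fin 2) (Fin 2) ℤ) _ _ + (↑(a * b) : Matrix (Fin 2) (Fin 2) ℤ) _ _ = 1
      rw [Units.val_mul]
      simp only [Matrix.mul_apply, Fin.sum_univ_two]
      linear_combination (↑b : Matrix (Fin 2) (Fin 2) ℤ) 0 1 * ha1 +
        (↑b : Matrix (Fin 2) (Fin 2) ℤ) 1 1 * ha2 + hb2
  inv_mem' := by
    rintro a ⟨ha1, ha2⟩
    set B : Matrix (Fin 2) (Fin 2) ℤ := (↑(a⁻¹) : Matrix (Fin 2) (Fin 2) ℤ) with hBdef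
    have hAB : (↑a : Matrix (Fin 2) (Fin 2) ℤ) * B = 1 := by
      rw [hBdef, ← Units.val_mul, mul_inv_cancel, Units.val_one]
    have e1 := congrFun (congrFun hAB 0) 0
    have e2 := congrFun (congrFun hAB 1) 0
    have e3 := congrFun (congrFun hAB 0) 1
    have e4 := congrFun (congrFun hAB 1) 1
    simp only [Matrix.mul_apply, Fin.sum_univ_two, Matrix.one_apply, if_pos, if_neg,
      Fin.zero_eq_one_iff, Fin.one_eq_zero_iff, Nat.succ_ne_self, ite_true, ite_false,
      reduceIte, Fin.isValue] at e1 e2 e3 e4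
    constructor
    · show B 0 0 + B 1 0 = 1
      linear_combination e1 + e2 - B 0 0 * ha1 - B 1 0 * ha2
    · show B 0 1 + B 1 1 = 1
      linear_combination e3 + e4 - B 0 1 * ha1 - B 1 1 * ha2

/-- `G_μ` is exactly the subgroup of `GL(2,ℤ)` generated by
`f₀ = [[1,2],[0,−1]]` and `f₁ = [[0,1],[1,0]]`. -/
theorem Gmu_eq_closure_f0_f1 (g : Matrix.GeneralLinearGroup (Fin 2) ℤ) :
    g ∈ Subgroup.closure ({fU 0, fU 1} : Set (Matrix.GeneralLinearGroup (Fin 2) ℤ)) ↔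
      memGmu g := by
  constructor
  · intro h
    have hle : Subgroup.closure ({fU 0, fU 1} : Set (Matrix.GeneralLinearGroup (Fin 2) ℤ)) ≤ Gmu := by
      rw [Subgroup.closure_le]
      rintro x (rfl | rfl)
      · exact ⟨by norm_num [fU, fmat], by norm_num [fU, fmat]⟩
      · exact ⟨by norm_num [fU, fmat], by norm_num [fU, fmat]⟩
    exact hle h
  · intro h
    obtain ⟨n, rfl | rfl⟩ := classify g h
    · exact gU_mem n
    · have h0 : fU 0 ∈ Subgroup.closure ({fU 0, fU 1} : Set (Matrix.GeneralLinearGroup (Fin 2) ℤ)) :=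
        Subgroup.subset_closure (Set.mem_insert _ _)
      have := Subgroup.mul_mem _ (gU_mem n) h0
      rwa [← fU_eq] at this
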